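/- (Global solution of the augmented Lagrangian subproblem, one-dimensional instance.) Fix real parameters q, c, d, e, a fixed multiplier μ ∈ ℝ, and a penalty parameter ν > 0. Let h(x) = ½(½x² − d)² − e and define the subproblem objective L(x) = ½qx² − cx + μh(x) + (1/(2ν))h(x)², and the total complementarity function Ξ₁ᵛ(x, τ, σ) = ½(q + (μ+τ)σ)x² − cx − (μ+τ)(½σ² + σd + e) − ½ντ². Suppose (x̄, τ̄, σ̄) ∈ ℝ³ is a critical point of Ξ₁ᵛ (all three partial derivatives vanish), with μ + τ̄ > 0 and q + (μ+τ̄)σ̄ > 0. Then L(x̄) = Ξ₁ᵛ(x̄, τ̄, σ̄), τ̄ = h(x̄)/ν, and x̄ is a global minimizer of L on ℝ: L(x̄) ≤ L(x) for all x ∈ ℝ. -/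
import Mathlib


/-- The constraint function `h(x) = ½(½x² − d)² − e`. -/
noncomputable def hCon (d e : ℝ) (x : ℝ) : ℝ :=
  (1/2) * ((1/2) * x ^ 2 - d) ^ 2 - e

/-- The augmented Lagrangian subproblem objective
`L_{ν,μ}(x) = ½qx² − cx + μh(x) + (1/(2ν))h(x)²`. -/
noncomputable def Lsub (q c d e μ ν : ℝ) (x : ℝ) : ℝ :=
  (1/2) * q * x ^ 2 - c * x + μ * hCon d e x + (1 / (2 * ν)) * (hCon d e x) ^ 2

/-- The total complementarity function of the subproblem:
`Ξ₁ᵛ(x, τ, σ) = ½(q + (μ+τ)σ)x² − cx − (μ+τ)(½σ² + σd + e) − ½ντ²`. -/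
noncomputable def XiAug (q c d e μ ν : ℝ) (x τ σ : ℝ) : ℝ :=
  (1/2) * (q + (μ + τ) * σ) * x ^ 2 - c * x
    - (μ + τ) * (σ ^ 2 / 2 + σ * d + e) - (1/2) * ν * τ ^ 2

lemma deriv_quad (A B C x : ℝ) : deriv (fun y => A * y ^ 2 + B * y + C) x = 2 * A * x + B := by
  have h := (((hasDerivAt_pow 2 x).const_mul A).add ((hasDerivAt_id x).const_mul B)).add_const C
  have h2 : HasDerivAt (fun y => A * y ^ 2 + B * y + C) (A * (2 * x ^ 1) + B * 1) x := by
    simpa using h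
  rw [h2.deriv]; ring

set_option maxHeartbeats 1000000 in
/-- Global solution of the augmented Lagrangian subproblem,
one-dimensional instance: if `(x̄, τ̄, σ̄)` is a critical point of `Ξ₁ᵛ`
with `μ + τ̄ > 0` and `q + (μ+τ̄)σ̄ > 0` (and `ν > 0`), then
`L(x̄) = Ξ₁ᵛ(x̄, τ̄, σ̄)`, `τ̄ = h(x̄)/ν`, and `x̄` is a global minimizer of
the subproblem objective `L` on `ℝ`. -/
theorem augmented_subproblem_global_min
    (q c d e μ ν : ℝ) (hν : 0 < ν) (xb τb σb : ℝ)
    (hx : deriv (fun x => XiAug q c d e μ ν x τb σb) xb = 0)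
    (hτ : deriv (fun τ => XiAug q c d e μ ν xb τ σb) τb = 0)
    (hσ : deriv (fun σ => XiAug q c d e μ ν xb τb σ) σb = 0)
    (hμτ : 0 < μ + τb) (hG : 0 < q + (μ + τb) * σb) :
    Lsub q c d e μ ν xb = XiAug q c d e μ ν xb τb σb ∧
    τb = hCon d e xb / ν ∧
    ∀ x : ℝ, Lsub q c d e μ ν xb ≤ Lsub q c d e μ ν x := by
  have hνne : ν ≠ 0 := ne_of_gt hν
  have hh : 2 * ν * (1 / (2 * ν)) = 1 := by field_simp
  -- rewrite the three derivative conditions as algebraic equations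
  have Hx : (q + (μ + τb) * σb) * xb - c = 0 := by
    have e1 : (fun x => XiAug q c d e μ ν x τb σb)
        = fun x => ((1/2) * (q + (μ + τb) * σb)) * x ^ 2 + (-c) * x +
          (-(μ + τb) * (σb ^ 2 / 2 + σb * d + e) - (1/2) * ν * τb ^ 2) := by
      funext x; simp only [XiAug]; ring
    rw [e1, deriv_quad] at hx
    linarith [hx]
  have Hτ : (1/2) * σb * xb ^ 2 - (σb ^ 2 / 2 + σb * d + e) - ν * τb = 0 := by
    have e1 : (fun τ => XiAug q c d e μ ν xb τ σb)
        = fun τ => (-(1/2) * ν) * τ ^ 2 +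
          ((1/2) * σb * xb ^ 2 - (σb ^ 2 / 2 + σb * d + e)) * τ +
          ((1/2) * (q + μ * σb) * xb ^ 2 - c * xb - μ * (σb ^ 2 / 2 + σb * d + e)) := by
      funext τ; simp only [XiAug]; ring
    rw [e1, deriv_quad] at hτ
    linarith [hτ]
  have Hσ : (μ + τb) * ((1/2) * xb ^ 2 - d - σb) = 0 := by
    have e1 : (fun σ => XiAug q c d e μ ν xb τb σ)
        = fun σ => (-(μ + τb) / 2) * σ ^ 2 +
          ((1/2) * (μ + τb) * xb ^ 2 - (μ + τb) * d) * σ +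
          ((1/2) * q * xb ^ 2 - c * xb - (μ + τb) * e - (1/2) * ν * τb ^ 2) := by
      funext σ; simp only [XiAug]; ring
    rw [e1, deriv_quad] at hσ
    linarith [hσ]
  have σeq : σb = (1/2) * xb ^ 2 - d := by
    rcases mul_eq_zero.mp Hσ with h | h
    · exact absurd h (ne_of_gt hμτ)
    · linarith
  have hτν : ν * τb = (1/2) * ((1/2) * xb ^ 2 - d) ^ 2 - e := by
    nlinarith [Hτ, σeq]
  have part1 : Lsub q c d e μ ν xb = XiAug q c d e μ ν xb τb σb := by
    have h2ν : (2 : ℝ) * ν ≠ 0 := by positivity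
    apply mul_left_cancel₀ h2ν
    rw [Lsub, XiAug, hCon]
    linear_combination (((1/2) * ((1/2) * xb ^ 2 - d) ^ 2 - e) ^ 2) * hh
      + (ν * τb - ((1/2) * ((1/2) * xb ^ 2 - d) ^ 2 - e)) * hτν
      + (-(ν * (μ + τb) * ((1/2) * xb ^ 2 - d - σb))) * σeq
  refine ⟨part1, ?_, ?_⟩
  · rw [hCon, eq_div_iff hνne]
    linarith [hτν]
  · intro x
    have key : 2 * ν * (Lsub q c d e μ ν x - Lsub q c d e μ ν xb)
        = ((1/2) * ((1/2) * x ^ 2 - d) ^ 2 - e - ν * τb) ^ 2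
          + ν * (μ + τb) * ((1/2) * x ^ 2 - d - σb) ^ 2
          + ν * (q + (μ + τb) * σb) * (x - xb) ^ 2 := by
      rw [Lsub, Lsub, hCon, hCon]
      linear_combination (2 * ν * (x - xb)) * Hx
        + (((1/2) * ((1/2) * xb ^ 2 - d) ^ 2 - e) - ν * τb) * hτν
        + (ν * (μ + τb) * ((1/2) * xb ^ 2 - d - σb)) * σeq
        + (((1/2) * ((1/2) * x ^ 2 - d) ^ 2 - e) ^ 2
            - ((1/2) * ((1/2) * xb ^ 2 - d) ^ 2 - e) ^ 2) * hh
    nlinarith [key, sq_nonneg ((1/2) * ((1/2) * x ^ 2 - d) ^ 2 - e - ν * τb),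
      mul_nonneg (mul_nonneg hν.le hμτ.le) (sq_nonneg ((1/2) * x ^ 2 - d - σb)),
      mul_nonneg (mul_nonneg hν.le hG.le) (sq_nonneg (x - xb))]
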